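/- Local atomic pairing estimate against L^{(q,p,η)loc}_{r',φ_1,δ}: let 0<q≤1, 0<p<∞, 0<η<∞, let 1<r≤∞ with conjugate exponent r', let δ ≥ ⌊d(1/q−1)⌋ be an integer, and fix K ≥ 1, C_0 > 1. Let g ∈ L^{(q,p,η)loc}_{r',φ_1,δ}. Let {Ω^j}_{j∈ℤ} be open proper subsets of ℝ^d with ‖∑_{j∈ℤ} 2^{jη} χ_{Ω^j}‖_{q/η,p/η} < ∞; for each j, let {Q^{j,k}}_{k≥0} be cubes with Q^{j,k} ⊂ Ω^j for all k and ∑_{k≥0} χ_{Q^{j,k}} ≤ K, and let a_{j,k} be a local (q,r,δ)-atom with associated cube Q̃^{j,k} := C_0 Q^{j,k}. Then ∑_{j∈ℤ} ∑_{k≥0} 2^j |Q̃^{j,k}|^{1/q} |∫_{ℝ^d} g(x) a_{j,k}(x) dx| ≤ 2 ‖g‖_{L^{(q,p,η)loc}_{r',φ_1,δ}} ‖∑_{j∈ℤ} 2^{jη} χ_{Ω^j}‖_{q/η,p/η}^{1/η}. -/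

import Mathlib

open MeasureTheory ENNReal Set
open scoped Classical

noncomputable section

namespace HA

/-- `ℝ^d` with the Euclidean metric. -/
abbrev Ed (d : ℕ) : Type := EuclideanSpace ℝ (Fin d)

/-- The unit cube `k + [0,1)^d`. -/
def unitCube (d : ℕ) (k : Fin d → ℤ) : Set (Ed d) :=
  {x | ∀ i, (k i : ℝ) ≤ x i ∧ x i < (k i : ℝ) + 1}

/-- Closed axis-parallel cube with center `c` and side-length `ℓ`. -/
def cube (d : ℕ) (c : Ed d) (ℓ : ℝ) : Set (Ed d) :=
  {x | ∀ i, |x i - c i| ≤ ℓ / 2}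

/-- Open axis-parallel cube with center `c` and side-length `ℓ`. -/
def openCube (d : ℕ) (c : Ed d) (ℓ : ℝ) : Set (Ed d) :=
  {x | ∀ i, |x i - c i| < ℓ / 2}

/-- The Wiener amalgam quasi-norm `‖F‖_{q,p}` of an `ℝ≥0∞`-valued function:
`(∑_{k ∈ ℤ^d} (∫_{Q_k} F^q)^{p/q})^{1/p}`. -/
def eAmalgam (d : ℕ) (q p : ℝ) (F : Ed d → ℝ≥0∞) : ℝ≥0∞ :=
  (∑' k : Fin d → ℤ, ((∫⁻ x in unitCube d k, F x ^ q) ^ (1 / q)) ^ p) ^ (1 / p)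

/-- The Wiener amalgam quasi-norm `‖f‖_{q,p}` of a complex-valued function. -/
def amalgamNorm (d : ℕ) (q p : ℝ) (f : Ed d → ℂ) : ℝ≥0∞ :=
  eAmalgam d q p fun x => (‖f x‖₊ : ℝ≥0∞)

/-- The Hardy–Littlewood maximal function `𝔐 f`. -/
def maximalFn (d : ℕ) (f : Ed d → ℂ) (x : Ed d) : ℝ≥0∞ :=
  ⨆ (r : ℝ) (_ : 0 < r),
    (volume (Metric.ball x r))⁻¹ * ∫⁻ y in Metric.ball x r, (‖f y‖₊ : ℝ≥0∞)

/-- The `ℓ^u` norm of a sequence in `ℝ≥0∞`; for `u = ∞` it is the supremum. -/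
def ellU (u : ℝ≥0∞) (F : ℕ → ℝ≥0∞) : ℝ≥0∞ :=
  if u = ∞ then ⨆ n, F n else (∑' n, F n ^ u.toReal) ^ (1 / u.toReal)

/-- Polynomial functions on `ℝ^d` (complex valued) of degree at most `δ`. -/
def polySpace (d δ : ℕ) : Set (Ed d → ℂ) :=
  {g | ∃ P : MvPolynomial (Fin d) ℂ, P.totalDegree ≤ δ ∧
        ∀ x : Ed d, g x = MvPolynomial.eval (fun i => (x i : ℂ)) P}

/-- `P` is a polynomial of degree at most `δ` with `∫_Q (f - P) 𝔮 = 0`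
for every polynomial `𝔮` of degree at most `δ`. -/
def projCond (d δ : ℕ) (Q : Set (Ed d)) (f P : Ed d → ℂ) : Prop :=
  P ∈ polySpace d δ ∧ ∀ 𝔮 ∈ polySpace d δ, ∫ x in Q, (f x - P x) * 𝔮 x = 0

/-- The polynomial projection `P_Q^δ(f)` (defaulting to `0` when it does not exist). -/
def polyProj (d δ : ℕ) (Q : Set (Ed d)) (f : Ed d → ℂ) : Ed d → ℂ :=
  if h : ∃ P, projCond d δ Q f P then h.choose else 0

/-- Membership in `L^r_loc(ℝ^d)`. -/
def memLocLr (d : ℕ) (r : ℝ) (f : Ed d → ℂ) : Prop :=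
  AEStronglyMeasurable f volume ∧
    ∀ (c : Ed d) (ℓ : ℝ), 0 < ℓ → (∫⁻ x in cube d c ℓ, (‖f x‖₊ : ℝ≥0∞) ^ r) ≠ ∞

/-- A countable family of (nondegenerate) cubes contained in `Ω` with overlap at most `K`. -/
structure CubeFamily (d : ℕ) (K : ℝ) (Ω : Set (Ed d)) where
  center : ℕ → Ed d
  side : ℕ → ℝ
  side_pos : ∀ n, 0 < side n
  cube_subset : ∀ n, cube d (center n) (side n) ⊆ Ω
  overlap : ∀ x, (∑' n, (cube d (center n) (side n)).indicator (fun _ => (1 : ℝ≥0∞)) x)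
      ≤ ENNReal.ofReal K

/-- `|Q|^{1/r'} (∫_Q |g - P_Q^δ(g)|^r)^{1/r}` (note `1/r' = 1 - 1/r`). -/
def oscTerm (d δ : ℕ) (r : ℝ) (g : Ed d → ℂ) (Q : Set (Ed d)) : ℝ≥0∞ :=
  volume Q ^ (1 - 1 / r) * (∫⁻ x in Q, (‖g x - polyProj d δ Q g x‖₊ : ℝ≥0∞) ^ r) ^ (1 / r)

/-- `|Q|^{1/r'} (∫_Q |g|^r)^{1/r}`. -/
def intTerm (d : ℕ) (r : ℝ) (g : Ed d → ℂ) (Q : Set (Ed d)) : ℝ≥0∞ :=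
  volume Q ^ (1 - 1 / r) * (∫⁻ x in Q, (‖g x‖₊ : ℝ≥0∞) ^ r) ^ (1 / r)

/-- `inf_{𝔭 ∈ 𝒫_δ} |Q|^{1/r'} (∫_Q |g - 𝔭|^r)^{1/r}`. -/
def bestTerm (d δ : ℕ) (r : ℝ) (g : Ed d → ℂ) (Q : Set (Ed d)) : ℝ≥0∞ :=
  ⨅ P ∈ polySpace d δ,
    volume Q ^ (1 - 1 / r) * (∫⁻ x in Q, (‖g x - P x‖₊ : ℝ≥0∞) ^ r) ^ (1 / r)

/-- The functional `O(g, Ω, r)`. -/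
def Ofun (d δ : ℕ) (K C0 r : ℝ) (g : Ed d → ℂ) (Ω : Set (Ed d)) : ℝ≥0∞ :=
  ⨆ F : CubeFamily d K Ω, ∑' n, oscTerm d δ r g (cube d (F.center n) (C0 * F.side n))

/-- The functional `Õ(g, Ω, r)`. -/
def Otilde (d δ : ℕ) (K C0 r : ℝ) (g : Ed d → ℂ) (Ω : Set (Ed d)) : ℝ≥0∞ :=
  ⨆ F : CubeFamily d K Ω, ∑' n, bestTerm d δ r g (cube d (F.center n) (C0 * F.side n))

/-- The local functional `O(g, Ω, r)^{loc}`. -/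
def OfunLoc (d δ : ℕ) (K C0 r : ℝ) (g : Ed d → ℂ) (Ω : Set (Ed d)) : ℝ≥0∞ :=
  ⨆ F : CubeFamily d K Ω, ∑' n,
    if volume (cube d (F.center n) (C0 * F.side n)) < 1
    then oscTerm d δ r g (cube d (F.center n) (C0 * F.side n))
    else intTerm d r g (cube d (F.center n) (C0 * F.side n))

/-- `φ₁(Q) = ‖χ_Q‖_{q,p} / |Q|`. -/
def φ1 (d : ℕ) (q p : ℝ) (c : Ed d) (ℓ : ℝ) : ℝ≥0∞ :=
  eAmalgam d q p ((cube d c ℓ).indicator fun _ => (1 : ℝ≥0∞)) * (volume (cube d c ℓ))⁻¹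

/-- `φ₂(Q) = ‖χ_Q‖_{L^q} / |Q| = |Q|^{1/q} / |Q|`. -/
def φ2 (d : ℕ) (q : ℝ) (c : Ed d) (ℓ : ℝ) : ℝ≥0∞ :=
  volume (cube d c ℓ) ^ (1 / q) * (volume (cube d c ℓ))⁻¹

/-- The Campanato norm `‖f‖_{𝓛_{r,φ,δ}}`. -/
def campanato (d δ : ℕ) (r : ℝ) (φ : Ed d → ℝ → ℝ≥0∞) (f : Ed d → ℂ) : ℝ≥0∞ :=
  ⨆ (c : Ed d) (ℓ : ℝ) (_ : 0 < ℓ),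
    (φ c ℓ)⁻¹ * ((volume (cube d c ℓ))⁻¹ *
      ∫⁻ x in cube d c ℓ, (‖f x - polyProj d δ (cube d c ℓ) f x‖₊ : ℝ≥0∞) ^ r) ^ (1 / r)

/-- The local Campanato norm `‖f‖_{𝓛^{loc}_{r,φ,δ}}`. -/
def campanatoLoc (d δ : ℕ) (r : ℝ) (φ : Ed d → ℝ → ℝ≥0∞) (f : Ed d → ℂ) : ℝ≥0∞ :=
  (⨆ (c : Ed d) (ℓ : ℝ) (_ : 0 < ℓ) (_ : 1 ≤ volume (cube d c ℓ)),
    (φ c ℓ)⁻¹ * ((volume (cube d c ℓ))⁻¹ *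
      ∫⁻ x in cube d c ℓ, (‖f x‖₊ : ℝ≥0∞) ^ r) ^ (1 / r)) +
  (⨆ (c : Ed d) (ℓ : ℝ) (_ : 0 < ℓ) (_ : volume (cube d c ℓ) < 1),
    (φ c ℓ)⁻¹ * ((volume (cube d c ℓ))⁻¹ *
      ∫⁻ x in cube d c ℓ, (‖f x - polyProj d δ (cube d c ℓ) f x‖₊ : ℝ≥0∞) ^ r) ^ (1 / r))

/-- `‖∑_{j ∈ ℤ} 2^{jη} χ_{Ω^j}‖_{q/η, p/η}`. -/
def layerNorm (d : ℕ) (q p η : ℝ) (Ω : ℤ → Set (Ed d)) : ℝ≥0∞ :=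
  eAmalgam d (q / η) (p / η) fun x =>
    ∑' j : ℤ, (Ω j).indicator (fun _ => (2 : ℝ≥0∞) ^ ((j : ℝ) * η)) x

/-- The set of admissible constants in the defining inequality of `𝓛^{(q,p,η)}_{r,φ₁,δ}`. -/
def ONormSet (d δ : ℕ) (K C0 q p η r : ℝ) (g : Ed d → ℂ) : Set ℝ≥0∞ :=
  {C | ∀ Ω : ℤ → Set (Ed d), (∀ j, IsOpen (Ω j)) → (∀ j, Ω j ≠ univ) →
    layerNorm d q p η Ω ≠ ∞ →
    (∑' j : ℤ, (2 : ℝ≥0∞) ^ (j : ℝ) * Ofun d δ K C0 r g (Ω j)) ≤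
      C * layerNorm d q p η Ω ^ (1 / η)}

/-- The variant of `ONormSet` defined through the functional `Õ`. -/
def OtildeNormSet (d δ : ℕ) (K C0 q p η r : ℝ) (g : Ed d → ℂ) : Set ℝ≥0∞ :=
  {C | ∀ Ω : ℤ → Set (Ed d), (∀ j, IsOpen (Ω j)) → (∀ j, Ω j ≠ univ) →
    layerNorm d q p η Ω ≠ ∞ →
    (∑' j : ℤ, (2 : ℝ≥0∞) ^ (j : ℝ) * Otilde d δ K C0 r g (Ω j)) ≤
      C * layerNorm d q p η Ω ^ (1 / η)}

/-- The set of admissible constants in the defining inequality of `𝓛^{(q,p,η)loc}_{r,φ₁,δ}`. -/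
def ONormSetLoc (d δ : ℕ) (K C0 q p η r : ℝ) (g : Ed d → ℂ) : Set ℝ≥0∞ :=
  {C | ∀ Ω : ℤ → Set (Ed d), (∀ j, IsOpen (Ω j)) → (∀ j, Ω j ≠ univ) →
    layerNorm d q p η Ω ≠ ∞ →
    (∑' j : ℤ, (2 : ℝ≥0∞) ^ (j : ℝ) * OfunLoc d δ K C0 r g (Ω j)) ≤
      C * layerNorm d q p η Ω ^ (1 / η)}

/-- A `(q,r,s)`-atom with associated cube `Q`. -/
def IsHAtom (d : ℕ) (q : ℝ) (r : ℝ≥0∞) (s : ℕ) (a : Ed d → ℂ) (Q : Set (Ed d)) : Prop :=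
  (∀ x ∉ Q, a x = 0) ∧
  eLpNorm a r volume ≤ volume Q ^ (1 / r.toReal - 1 / q) ∧
  (∀ β : Fin d → ℕ, (∑ i, β i) ≤ s → ∫ x, (∏ i, (x i : ℂ) ^ β i) * a x = 0)

/-- A local `(q,r,s)`-atom with associated cube `Q`: vanishing moments are required
only when `|Q| < 1`. -/
def IsLocalHAtom (d : ℕ) (q : ℝ) (r : ℝ≥0∞) (s : ℕ) (a : Ed d → ℂ) (Q : Set (Ed d)) : Prop :=
  (∀ x ∉ Q, a x = 0) ∧
  eLpNorm a r volume ≤ volume Q ^ (1 / r.toReal - 1 / q) ∧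
  (volume Q < 1 → ∀ β : Fin d → ℕ, (∑ i, β i) ≤ s → ∫ x, (∏ i, (x i : ℂ) ^ β i) * a x = 0)


/-! ### Auxiliary lemmas -/

lemma cube_isClosed (d : ℕ) (c : Ed d) (ℓ : ℝ) : IsClosed (cube d c ℓ) := by
  have h : cube d c ℓ = ⋂ i, {x : Ed d | |x i - c i| ≤ ℓ / 2} := by
    ext x; simp [cube, Set.mem_iInter]
  rw [h]
  refine isClosed_iInter fun i => ?_
  have hc : Continuous fun x : Ed d => |x i - c i| :=
    (((EuclideanSpace.proj i).continuous).sub continuous_const).abs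
  exact isClosed_le hc continuous_const

lemma cube_subset_closedBall (d : ℕ) (c : Ed d) (ℓ : ℝ) :
    cube d c ℓ ⊆ Metric.closedBall c (Real.sqrt d * (|ℓ| + 1)) := by
  intro x hx
  simp only [Metric.mem_closedBall]
  rw [EuclideanSpace.dist_eq]
  have hsum : (∑ i, dist (x i) (c i) ^ 2) ≤ (d : ℝ) * (|ℓ| + 1) ^ 2 := by
    calc (∑ i, dist (x i) (c i) ^ 2) ≤ ∑ _i : Fin d, (|ℓ| + 1) ^ 2 := by
          refine Finset.sum_le_sum fun i _ => ?_
          have h1 : dist (x i) (c i) ≤ |ℓ| + 1 := by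
            rw [Real.dist_eq]
            have := hx i
            have h2 : ℓ / 2 ≤ |ℓ| + 1 := by
              have := abs_nonneg ℓ
              have := le_abs_self ℓ
              linarith
            linarith
          exact pow_le_pow_left₀ dist_nonneg h1 2
      _ = (d : ℝ) * (|ℓ| + 1) ^ 2 := by simp [Finset.sum_const, mul_comm]
  calc Real.sqrt (∑ i, dist (x i) (c i) ^ 2) ≤ Real.sqrt ((d : ℝ) * (|ℓ| + 1) ^ 2) :=
        Real.sqrt_le_sqrt hsum
    _ = Real.sqrt d * (|ℓ| + 1) := by
        rw [Real.sqrt_mul (Nat.cast_nonneg d), Real.sqrt_sq (by positivity)]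

lemma ball_subset_cube (d : ℕ) (c : Ed d) (ℓ : ℝ) :
    Metric.ball c (ℓ / 2) ⊆ cube d c ℓ := by
  intro x hx i
  have h1 : |x i - c i| ≤ dist x c := by
    rw [EuclideanSpace.dist_eq, ← Real.sqrt_sq_eq_abs]
    refine Real.sqrt_le_sqrt ?_
    have : dist (x i) (c i) ^ 2 = (x i - c i) ^ 2 := by rw [Real.dist_eq, sq_abs]
    rw [← this]
    exact Finset.single_le_sum (f := fun j => dist (x j) (c j) ^ 2)
      (fun j _ => sq_nonneg _) (Finset.mem_univ i)
  exact h1.trans (le_of_lt (Metric.mem_ball.mp hx))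

lemma cube_measurable (d : ℕ) (c : Ed d) (ℓ : ℝ) : MeasurableSet (cube d c ℓ) :=
  (cube_isClosed d c ℓ).measurableSet

lemma volume_cube_lt_top (d : ℕ) (c : Ed d) (ℓ : ℝ) : volume (cube d c ℓ) < ∞ :=
  lt_of_le_of_lt (measure_mono (cube_subset_closedBall d c ℓ)) (measure_closedBall_lt_top)

lemma volume_cube_pos (d : ℕ) (c : Ed d) {ℓ : ℝ} (hℓ : 0 < ℓ) : 0 < volume (cube d c ℓ) :=
  lt_of_lt_of_le (Metric.measure_ball_pos volume c (by positivity)) (measure_mono (ball_subset_cube d c ℓ))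

lemma cube_isCompact (d : ℕ) (c : Ed d) (ℓ : ℝ) : IsCompact (cube d c ℓ) :=
  Metric.isCompact_of_isClosed_isBounded (cube_isClosed d c ℓ)
    (Metric.isBounded_closedBall.subset (cube_subset_closedBall d c ℓ))

lemma polySpace_zero (d δ : ℕ) : (0 : Ed d → ℂ) ∈ polySpace d δ :=
  ⟨0, by simp, by simp⟩

lemma polyProj_mem (d δ : ℕ) (Q : Set (Ed d)) (f : Ed d → ℂ) :
    polyProj d δ Q f ∈ polySpace d δ := by
  rw [polyProj]
  split
  · next h => exact h.choose_spec.1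
  · exact polySpace_zero d δ

lemma poly_continuous {d δ : ℕ} {P : Ed d → ℂ} (hP : P ∈ polySpace d δ) : Continuous P := by
  obtain ⟨p, -, hp⟩ := hP
  have h : P = fun x => MvPolynomial.eval (fun i => (x i : ℂ)) p := funext hp
  rw [h]
  simp only [MvPolynomial.eval_eq']
  refine continuous_finset_sum _ fun m _ => ?_
  refine continuous_const.mul (continuous_finset_prod _ fun i _ => ?_)
  exact (Complex.continuous_ofReal.comp (EuclideanSpace.proj i).continuous).pow _

/-- Per-atom pairing bound. -/
lemma pairing_bound (d δ : ℕ) (q r' : ℝ) (r : ℝ≥0∞)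
    (hq0 : 0 < q) (hr : 1 < r) (hrr' : 1 / r.toReal + 1 / r' = 1)
    (g : Ed d → ℂ) (hgm : AEStronglyMeasurable g volume)
    (hgloc : ∀ (c : Ed d) (ℓ : ℝ), 0 < ℓ →
      (∫⁻ x in cube d c ℓ, (‖g x‖₊ : ℝ≥0∞) ^ r') ≠ ∞)
    (c : Ed d) (ℓ : ℝ) (hℓ : 0 < ℓ)
    (a : Ed d → ℂ) (ham : AEStronglyMeasurable a volume)
    (ha : IsLocalHAtom d q r δ a (cube d c ℓ)) :
    volume (cube d c ℓ) ^ (1 / q) * (‖∫ x, g x * a x‖₊ : ℝ≥0∞) ≤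
      if volume (cube d c ℓ) < 1 then oscTerm d δ r' g (cube d c ℓ)
      else intTerm d r' g (cube d c ℓ) := by
  classical
  set Q : Set (Ed d) := cube d c ℓ with hQdef
  have hQm : MeasurableSet Q := cube_measurable d c ℓ
  have v0 : volume Q ≠ 0 := (volume_cube_pos d c hℓ).ne'
  have vt : volume Q ≠ ∞ := (volume_cube_lt_top d c ℓ).ne
  have hr0 : r ≠ 0 := by positivity
  have hr'eq_of_top : r = ∞ → r' = 1 := by
    intro hri
    rw [hri] at hrr'
    simp only [ENNReal.toReal_top, _root_.div_zero, zero_add] at hrr'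
    have hr'0 : r' ≠ 0 := fun h => by rw [h] at hrr'; simp at hrr'
    field_simp at hrr'
    linarith
  have hrt1_of_ne : r ≠ ∞ → 1 < r.toReal := by
    intro hri
    have := ENNReal.toReal_strict_mono hri hr
    simpa using this
  have hr'1 : 1 ≤ r' := by
    rcases eq_or_ne r ∞ with hri | hri
    · exact (hr'eq_of_top hri).ge
    · have hrt1 := hrt1_of_ne hri
      have h1 : 0 < 1 / r.toReal := by positivity
      have h2 : 1 / r.toReal < 1 := by
        rw [div_lt_one (by linarith)]; exact hrt1
      have h3 : 0 < 1 / r' := by linarith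
      have hr'pos : 0 < r' := by
        rcases lt_trichotomy r' 0 with h | h | h
        · exfalso; have : 1 / r' < 0 := div_neg_of_pos_of_neg one_pos h; linarith
        · exfalso; rw [h] at h3; simp at h3
        · exact h
      have h4 : 1 / r' < 1 := by linarith
      rw [div_lt_one hr'pos] at h4
      exact h4.le
  have hr'pos : 0 < r' := lt_of_lt_of_le one_pos hr'1
  have hsupp : ∀ f : Ed d → ℂ,
      (∫⁻ x, (‖f x‖₊ : ℝ≥0∞) * (‖a x‖₊ : ℝ≥0∞)) =
        ∫⁻ x in Q, (‖f x‖₊ : ℝ≥0∞) * (‖a x‖₊ : ℝ≥0∞) := by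
    intro f
    rw [← lintegral_indicator hQm]
    congr 1
    funext x
    by_cases hx : x ∈ Q
    · simp [hx]
    · simp [hx, ha.1 x hx]
  have key : ∀ f : Ed d → ℂ, AEStronglyMeasurable f volume →
      (∫⁻ x in Q, (‖f x‖₊ : ℝ≥0∞) * (‖a x‖₊ : ℝ≥0∞)) ≤
        (∫⁻ x in Q, (‖f x‖₊ : ℝ≥0∞) ^ r') ^ (1 / r') * eLpNorm a r volume := by
    intro f hf
    rcases eq_or_ne r ∞ with hri | hri
    · have hr'eq : r' = 1 := hr'eq_of_top hri
      subst hr'eq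
      calc (∫⁻ x in Q, (‖f x‖₊ : ℝ≥0∞) * (‖a x‖₊ : ℝ≥0∞)) ≤
            ∫⁻ x in Q, (‖f x‖₊ : ℝ≥0∞) * eLpNormEssSup a volume := by
            refine lintegral_mono_ae ?_
            filter_upwards [ae_restrict_of_ae (ae_le_eLpNormEssSup (f := a) (μ := volume))]
              with x hx
            exact _root_.mul_le_mul_right hx _
        _ = (∫⁻ x in Q, (‖f x‖₊ : ℝ≥0∞)) * eLpNormEssSup a volume :=
            lintegral_mul_const'' _ hf.restrict.enorm
        _ = (∫⁻ x in Q, (‖f x‖₊ : ℝ≥0∞) ^ (1 : ℝ)) ^ (1 / (1 : ℝ)) * eLpNorm a r volume := by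
            rw [hri, eLpNorm_exponent_top]
            simp
    · have hrt1 := hrt1_of_ne hri
      have conj : Real.HolderConjugate r' r.toReal := by
        rw [Real.holderConjugate_iff]
        constructor
        · rcases lt_or_eq_of_le hr'1 with h | h
          · exact h
          · exfalso
            rw [← h] at hrr'
            simp at hrr'
            have hrtpos : 0 < 1 / r.toReal := by positivity
            linarith
        · rw [inv_eq_one_div, inv_eq_one_div]; linarith
      have hH := ENNReal.lintegral_mul_le_Lp_mul_Lq (volume.restrict Q) conj
        (hf.restrict.enorm) (ham.restrict.enorm)
      simp only [Pi.mul_apply] at hH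
      refine hH.trans (_root_.mul_le_mul_right ?_ _)
      rw [eLpNorm_eq_lintegral_rpow_enorm_toReal hr0 hri]
      exact ENNReal.rpow_le_rpow (setLIntegral_le_lintegral _ _) (by positivity)
  have hA : eLpNorm a r volume ≤ volume Q ^ (1 / r.toReal - 1 / q) := ha.2.1
  have hvne : volume Q ^ (1 / r.toReal - 1 / q) ≠ ∞ := by
    intro h
    rcases ENNReal.rpow_eq_top_iff.mp h with ⟨h1, -⟩ | ⟨h1, -⟩
    · exact v0 h1
    · exact vt h1
  have hAne : eLpNorm a r volume ≠ ∞ := ne_top_of_le_ne_top hvne hA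
  have hintA : (∫⁻ x in Q, (‖a x‖₊ : ℝ≥0∞)) ≠ ∞ := by
    have h1 := key (fun _ => (1 : ℂ)) aestronglyMeasurable_const
    simp only [nnnorm_one, ENNReal.coe_one, one_mul, ENNReal.one_rpow] at h1
    refine ne_top_of_le_ne_top ?_ h1
    exact ENNReal.mul_ne_top
      (ENNReal.rpow_ne_top_of_nonneg (by positivity)
        (by rw [setLIntegral_one]; exact vt)) hAne
  have hIcont : ∀ f : Ed d → ℂ, Continuous f → Integrable (fun x => f x * a x) volume := by
    intro f hf
    obtain ⟨M, hM⟩ := (cube_isCompact d c ℓ).exists_bound_of_continuousOn hf.continuousOn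
    refine ⟨hf.aestronglyMeasurable.mul ham, ?_⟩
    show (∫⁻ x, (‖f x * a x‖₊ : ℝ≥0∞)) < ∞
    have heq : (∫⁻ x, (‖f x * a x‖₊ : ℝ≥0∞)) =
        ∫⁻ x in Q, (‖f x‖₊ : ℝ≥0∞) * (‖a x‖₊ : ℝ≥0∞) := by
      rw [← hsupp f]
      congr 1; funext x; rw [nnnorm_mul, ENNReal.coe_mul]
    rw [heq]
    calc (∫⁻ x in Q, (‖f x‖₊ : ℝ≥0∞) * (‖a x‖₊ : ℝ≥0∞)) ≤
          ∫⁻ x in Q, ENNReal.ofReal M * (‖a x‖₊ : ℝ≥0∞) := by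
          refine lintegral_mono_ae ?_
          filter_upwards [ae_restrict_mem hQm] with x hx
          refine _root_.mul_le_mul_left ?_ _
          change ‖f x‖ₑ ≤ _
          rw [← ofReal_norm]
          exact ENNReal.ofReal_le_ofReal (hM x hx)
      _ = ENNReal.ofReal M * ∫⁻ x in Q, (‖a x‖₊ : ℝ≥0∞) :=
          lintegral_const_mul' _ _ ENNReal.ofReal_ne_top
      _ < ∞ := ENNReal.mul_lt_top ENNReal.ofReal_lt_top hintA.lt_top
  have hIga : Integrable (fun x => g x * a x) volume := by
    refine ⟨hgm.mul ham, ?_⟩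
    show (∫⁻ x, (‖g x * a x‖₊ : ℝ≥0∞)) < ∞
    have heq : (∫⁻ x, (‖g x * a x‖₊ : ℝ≥0∞)) =
        ∫⁻ x in Q, (‖g x‖₊ : ℝ≥0∞) * (‖a x‖₊ : ℝ≥0∞) := by
      rw [← hsupp g]
      congr 1; funext x; rw [nnnorm_mul, ENNReal.coe_mul]
    rw [heq]
    refine lt_of_le_of_lt (key g hgm) ?_
    exact ENNReal.mul_lt_top
      (ENNReal.rpow_lt_top_of_nonneg (by positivity) (hgloc c ℓ hℓ)) hAne.lt_top
  set P : Ed d → ℂ := polyProj d δ Q g with hPdef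
  have hPmem : P ∈ polySpace d δ := polyProj_mem d δ Q g
  have hPcont : Continuous P := poly_continuous hPmem
  -- main estimate, generic in f
  have main : ∀ f : Ed d → ℂ, AEStronglyMeasurable f volume →
      volume Q ^ (1 / q) * (‖∫ x, f x * a x‖₊ : ℝ≥0∞) ≤
        volume Q ^ (1 - 1 / r') * (∫⁻ x in Q, (‖f x‖₊ : ℝ≥0∞) ^ r') ^ (1 / r') := by
    intro f hf
    have h1 : (‖∫ x, f x * a x‖₊ : ℝ≥0∞) ≤ ∫⁻ x in Q, (‖f x‖₊ : ℝ≥0∞) * (‖a x‖₊ : ℝ≥0∞) := by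
      refine (enorm_integral_le_lintegral_enorm _).trans ?_
      rw [← hsupp f]
      refine le_of_eq ?_
      congr 1; funext x; rw [enorm_mul]; rfl
    calc volume Q ^ (1 / q) * (‖∫ x, f x * a x‖₊ : ℝ≥0∞) ≤
          volume Q ^ (1 / q) *
            ((∫⁻ x in Q, (‖f x‖₊ : ℝ≥0∞) ^ r') ^ (1 / r') * eLpNorm a r volume) :=
          _root_.mul_le_mul_right (h1.trans (key f hf)) _
      _ ≤ volume Q ^ (1 / q) *
            ((∫⁻ x in Q, (‖f x‖₊ : ℝ≥0∞) ^ r') ^ (1 / r') *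
              volume Q ^ (1 / r.toReal - 1 / q)) :=
          _root_.mul_le_mul_right (_root_.mul_le_mul_right hA _) _
      _ = volume Q ^ (1 - 1 / r') * (∫⁻ x in Q, (‖f x‖₊ : ℝ≥0∞) ^ r') ^ (1 / r') := by
          rw [← mul_assoc, mul_comm (volume Q ^ (1 / q)) _, mul_assoc,
            ← ENNReal.rpow_add _ _ v0 vt]
          have hexp : 1 / q + (1 / r.toReal - 1 / q) = 1 - 1 / r' := by linarith
          rw [hexp, mul_comm]
  by_cases hv : volume Q < 1
  · rw [if_pos hv]
    have hmom : ∫ x, P x * a x = 0 := by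
      obtain ⟨p, hpd, hpe⟩ := hPmem
      have hPx : ∀ x, P x * a x =
          ∑ m ∈ p.support, p.coeff m * ((∏ i, ((x i : ℝ) : ℂ) ^ m i) * a x) := by
        intro x
        rw [hpe x, MvPolynomial.eval_eq', Finset.sum_mul]
        exact Finset.sum_congr rfl fun m _ => by ring
      have hcont : ∀ m : Fin d →₀ ℕ, Continuous fun x : Ed d => ∏ i, ((x i : ℝ) : ℂ) ^ m i := by
        intro m
        refine continuous_finset_prod _ fun i _ => ?_
        exact (Complex.continuous_ofReal.comp (EuclideanSpace.proj i).continuous).pow _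
      calc (∫ x, P x * a x) =
            ∫ x, ∑ m ∈ p.support, p.coeff m * ((∏ i, ((x i : ℝ) : ℂ) ^ m i) * a x) := by
            exact integral_congr_ae (Filter.Eventually.of_forall hPx)
        _ = ∑ m ∈ p.support, ∫ x, p.coeff m * ((∏ i, ((x i : ℝ) : ℂ) ^ m i) * a x) :=
            integral_finset_sum _ fun m _ => ((hIcont _ (hcont m)).const_mul _)
        _ = 0 := by
            refine Finset.sum_eq_zero fun m hm => ?_
            rw [integral_const_mul]
            have hdeg : (∑ i, m i) ≤ δ := by
              have h1 : (m.sum fun _ e => e) ≤ p.totalDegree := MvPolynomial.le_totalDegree hm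
              have h2 : (m.sum fun _ e => e) = ∑ i, m i :=
                Finsupp.sum_fintype m _ fun _ => rfl
              rw [← h2]; exact h1.trans hpd
            rw [ha.2.2 hv (fun i => m i) hdeg, mul_zero]
    have h0 : (∫ x, g x * a x) = ∫ x, (g x - P x) * a x := by
      have heq : (fun x => (g x - P x) * a x) = fun x => g x * a x - P x * a x := by
        funext x; ring
      rw [heq, integral_sub hIga (hIcont P hPcont), hmom, sub_zero]
    rw [h0]
    exact main (fun x => g x - P x) (hgm.sub hPcont.aestronglyMeasurable)
  · rw [if_neg hv]
    exact main g hgm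


/-- local atomic pairing estimate against `𝓛^{(q,p,η)loc}_{r',φ₁,δ}`:
`∑_{j,k} 2^j |Q̃^{j,k}|^{1/q} |∫ g a_{j,k}| ≤ 2 ‖g‖ ⬝ ‖∑_j 2^{jη} χ_{Ω^j}‖_{q/η,p/η}^{1/η}`. -/
theorem stmt_18 (d δ : ℕ) (q p η r' K C0 : ℝ) (r : ℝ≥0∞)
    (hq0 : 0 < q) (hq1 : q ≤ 1) (hp0 : 0 < p) (hη : 0 < η)
    (hr : 1 < r) (hrr' : 1 / r.toReal + 1 / r' = 1)
    (hδ : Int.floor ((d : ℝ) * (1 / q - 1)) ≤ (δ : ℤ))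
    (hK : 1 ≤ K) (hC0 : 1 < C0)
    (g : Ed d → ℂ) (hgl : memLocLr d r' g)
    (hg : ∃ C ∈ ONormSetLoc d δ K C0 q p η r' g, C ≠ ∞)
    (Ω : ℤ → Set (Ed d)) (hΩo : ∀ j, IsOpen (Ω j)) (hΩp : ∀ j, Ω j ≠ univ)
    (hfin : layerNorm d q p η Ω ≠ ∞)
    (cs : ℤ → ℕ → Ed d) (ls : ℤ → ℕ → ℝ)
    (hls : ∀ j k, 0 < ls j k)
    (hsub : ∀ j k, cube d (cs j k) (ls j k) ⊆ Ω j)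
    (hover : ∀ j x,
      (∑' k, (cube d (cs j k) (ls j k)).indicator (fun _ => (1 : ℝ≥0∞)) x) ≤ ENNReal.ofReal K)
    (a : ℤ → ℕ → Ed d → ℂ) (hameas : ∀ j k, AEStronglyMeasurable (a j k) volume)
    (hatom : ∀ j k, IsLocalHAtom d q r δ (a j k) (cube d (cs j k) (C0 * ls j k))) :
    (∑' (j : ℤ) (k : ℕ), (2 : ℝ≥0∞) ^ (j : ℝ) *
        volume (cube d (cs j k) (C0 * ls j k)) ^ (1 / q) *
        (‖∫ x, g x * a j k x‖₊ : ℝ≥0∞)) ≤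
      2 * sInf (ONormSetLoc d δ K C0 q p η r' g) * layerNorm d q p η Ω ^ (1 / η) := by
  classical
  set S := ONormSetLoc d δ K C0 q p η r' g with hSdef
  set L := layerNorm d q p η Ω ^ (1 / η) with hLdef
  have hL : L ≠ ∞ := ENNReal.rpow_ne_top_of_nonneg (by positivity) hfin
  have hC0pos : (0 : ℝ) < C0 := lt_trans one_pos hC0
  let F : ∀ j : ℤ, CubeFamily d K (Ω j) := fun j => ⟨cs j, ls j, hls j, hsub j, hover j⟩
  have hstep : ∀ j : ℤ,
      (∑' k : ℕ, (2 : ℝ≥0∞) ^ (j : ℝ) *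
          volume (cube d (cs j k) (C0 * ls j k)) ^ (1 / q) *
          (‖∫ x, g x * a j k x‖₊ : ℝ≥0∞)) ≤
        (2 : ℝ≥0∞) ^ (j : ℝ) * OfunLoc d δ K C0 r' g (Ω j) := by
    intro j
    have h1 : ∀ k : ℕ,
        volume (cube d (cs j k) (C0 * ls j k)) ^ (1 / q) *
            (‖∫ x, g x * a j k x‖₊ : ℝ≥0∞) ≤
          (if volume (cube d (cs j k) (C0 * ls j k)) < 1
            then oscTerm d δ r' g (cube d (cs j k) (C0 * ls j k))
            else intTerm d r' g (cube d (cs j k) (C0 * ls j k))) := fun k =>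
      pairing_bound d δ q r' r hq0 hr hrr' g hgl.1 hgl.2 (cs j k) (C0 * ls j k)
        (mul_pos hC0pos (hls j k)) (a j k) (hameas j k) (hatom j k)
    calc (∑' k : ℕ, (2 : ℝ≥0∞) ^ (j : ℝ) *
            volume (cube d (cs j k) (C0 * ls j k)) ^ (1 / q) *
            (‖∫ x, g x * a j k x‖₊ : ℝ≥0∞)) =
          (2 : ℝ≥0∞) ^ (j : ℝ) * ∑' k : ℕ,
            volume (cube d (cs j k) (C0 * ls j k)) ^ (1 / q) *
            (‖∫ x, g x * a j k x‖₊ : ℝ≥0∞) := by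
          rw [← ENNReal.tsum_mul_left]
          exact tsum_congr fun k => by rw [mul_assoc]
      _ ≤ (2 : ℝ≥0∞) ^ (j : ℝ) * ∑' k : ℕ,
            (if volume (cube d (cs j k) (C0 * ls j k)) < 1
              then oscTerm d δ r' g (cube d (cs j k) (C0 * ls j k))
              else intTerm d r' g (cube d (cs j k) (C0 * ls j k))) :=
          _root_.mul_le_mul_right (ENNReal.tsum_le_tsum h1) _
      _ ≤ (2 : ℝ≥0∞) ^ (j : ℝ) * OfunLoc d δ K C0 r' g (Ω j) := by
          refine _root_.mul_le_mul_right ?_ _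
          exact le_iSup (fun F' : CubeFamily d K (Ω j) => ∑' n : ℕ,
            if volume (cube d (F'.center n) (C0 * F'.side n)) < 1
            then oscTerm d δ r' g (cube d (F'.center n) (C0 * F'.side n))
            else intTerm d r' g (cube d (F'.center n) (C0 * F'.side n))) (F j)
  have hT : ∀ C ∈ S, (∑' (j : ℤ) (k : ℕ), (2 : ℝ≥0∞) ^ (j : ℝ) *
      volume (cube d (cs j k) (C0 * ls j k)) ^ (1 / q) *
      (‖∫ x, g x * a j k x‖₊ : ℝ≥0∞)) ≤ C * L := by
    intro C hC
    exact (ENNReal.tsum_le_tsum hstep).trans (hC Ω hΩo hΩp hfin)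
  obtain ⟨C, hCS, hCne⟩ := hg
  have hsne : sInf S ≠ ∞ := ne_top_of_le_ne_top hCne (sInf_le hCS)
  have hfinal : (∑' (j : ℤ) (k : ℕ), (2 : ℝ≥0∞) ^ (j : ℝ) *
      volume (cube d (cs j k) (C0 * ls j k)) ^ (1 / q) *
      (‖∫ x, g x * a j k x‖₊ : ℝ≥0∞)) ≤ sInf S * L := by
    by_cases hL0 : L = 0
    · calc _ ≤ C * L := hT C hCS
        _ = 0 := by rw [hL0, mul_zero]
        _ ≤ sInf S * L := zero_le'
    · refine ENNReal.le_of_forall_pos_le_add fun ε hε _ => ?_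
      have hεne : ((ε : ℝ≥0∞)) ≠ 0 := by exact_mod_cast hε.ne'
      have hdiv : (ε : ℝ≥0∞) / L ≠ 0 := by
        simp only [ne_eq, ENNReal.div_eq_zero_iff, not_or]
        exact ⟨hεne, hL⟩
      have hlt : sInf S < sInf S + (ε : ℝ≥0∞) / L := ENNReal.lt_add_right hsne hdiv
      obtain ⟨C', hC'S, hC'lt⟩ := sInf_lt_iff.mp hlt
      calc _ ≤ C' * L := hT C' hC'S
        _ ≤ (sInf S + (ε : ℝ≥0∞) / L) * L := _root_.mul_le_mul_left hC'lt.le _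
        _ = sInf S * L + ((ε : ℝ≥0∞) / L) * L := add_mul _ _ _
        _ = sInf S * L + ε := by rw [ENNReal.div_mul_cancel hL0 hL]
  calc (∑' (j : ℤ) (k : ℕ), (2 : ℝ≥0∞) ^ (j : ℝ) *
        volume (cube d (cs j k) (C0 * ls j k)) ^ (1 / q) *
        (‖∫ x, g x * a j k x‖₊ : ℝ≥0∞)) ≤ sInf S * L := hfinal
    _ ≤ 2 * sInf S * L := by
        rw [mul_assoc]
        exact le_mul_of_one_le_left (zero_le') one_le_two

end HA
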